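/- Let X be a real Banach space, A : X → Set X an accretive operator with zer A ≠ ∅, and for each γ > 0 let J_γ : X → X be a resolvent function of A. Let α ∈ [0,1), f : X → X an α-contraction, x ∈ X, (α_n) a sequence in [0,1], (λ_n) a sequence in (0,∞), (e_n) a sequence in X, and (x_n) the VAMe iteration. Assume: σ₁ is a rate of divergence of Σ_{n=0}^∞ α_n; σ₂ is a Cauchy modulus of Σ_{n=0}^∞ |α_n − α_{n+1}|; γ₁ is a Cauchy modulus of Σ_{n=0}^∞ |1 − λ_{n+1}/λ_n|; θ₁ is a Cauchy modulus of Σ_{n=0}^∞ ‖e_n‖. Let z ∈ zer A and K_z ∈ ℕ, K_z ≥ 1, with K_z ≥ max{‖x − z‖, ‖f(z) − z‖/(1 − α)} + ⌈Σ_{i=0}^{θ₁(0)} ‖e_i‖⌉ + 1. Define χ(k) = max{σ₂(6K_z(k+1) − 1), γ₁(6K_z(k+1) − 1), θ₁(6k+5)} and Φ(k) = σ₁(⌈(χ(2k+1) + 1 + ⌈ln(4K_z(k+1))⌉)/(1 − α)⌉ + 1). Then Φ is a rate of asymptotic regularity of (x_n): for all k ∈ ℕ and all n ≥ Φ(k),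 ‖x_{n+1} − x_n‖ ≤ 1/(k+1). -/

import Mathlib

set_option maxHeartbeats 4000000 in
/-- Rate of asymptotic regularity of the VAMe iteration. -/
theorem stmt_10 {X : Type*} [NormedAddCommGroup X] [NormedSpace ℝ X] [CompleteSpace X]
    (A : X → Set X)
    (hA : ∀ x y u v : X, u ∈ A x → v ∈ A y → ∀ γ : ℝ, 0 < γ →
      ‖x - y‖ ≤ ‖x - y + γ • (u - v)‖)
    (hzer : ∃ z : X, (0 : X) ∈ A z)
    (Jr : ℝ → X → X)
    (hJ : ∀ γ : ℝ, 0 < γ → ∀ x : X, γ⁻¹ • (x - Jr γ x) ∈ A (Jr γ x))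
    (α : ℝ) (hα0 : 0 ≤ α) (hα1 : α < 1)
    (f : X → X) (hf : ∀ x y : X, ‖f x - f y‖ ≤ α * ‖x - y‖)
    (x : X)
    (a : ℕ → ℝ) (ha : ∀ n, a n ∈ Set.Icc (0 : ℝ) 1)
    (lam : ℕ → ℝ) (hlam : ∀ n, 0 < lam n)
    (e : ℕ → X)
    (xs : ℕ → X) (hxs0 : xs 0 = x)
    (hxs : ∀ n : ℕ, xs (n + 1) = a n • f (xs n) + (1 - a n) • Jr (lam n) (xs n) + e n)
    -- σ₁ is a rate of divergence of Σ a n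
    (σ₁ : ℕ → ℕ) (hσ₁ : ∀ n : ℕ, (n : ℝ) ≤ ∑ i ∈ Finset.range (σ₁ n + 1), a i)
    -- σ₂ is a Cauchy modulus of Σ |a n - a (n+1)|
    (σ₂ : ℕ → ℕ)
    (hσ₂ : ∀ k : ℕ, ∀ n, σ₂ k ≤ n → ∀ p : ℕ,
      ∑ i ∈ Finset.Icc (n + 1) (n + p), |a i - a (i + 1)| ≤ 1 / (k + 1))
    -- γ₁ is a Cauchy modulus of Σ |1 - lam (n+1) / lam n|
    (γ₁ : ℕ → ℕ)
    (hγ₁ : ∀ k : ℕ, ∀ n, γ₁ k ≤ n → ∀ p : ℕ,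
      ∑ i ∈ Finset.Icc (n + 1) (n + p), |1 - lam (i + 1) / lam i| ≤ 1 / (k + 1))
    -- θ₁ is a Cauchy modulus of Σ ‖e n‖
    (θ₁ : ℕ → ℕ)
    (hθ₁ : ∀ k : ℕ, ∀ n, θ₁ k ≤ n → ∀ p : ℕ,
      ∑ i ∈ Finset.Icc (n + 1) (n + p), ‖e i‖ ≤ 1 / (k + 1))
    (z : X) (hz : (0 : X) ∈ A z)
    (Kz : ℕ) (hKz1 : 1 ≤ Kz)
    (hKz : max ‖x - z‖ (‖f z - z‖ / (1 - α)) +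
      (⌈∑ i ∈ Finset.range (θ₁ 0 + 1), ‖e i‖⌉₊ : ℝ) + 1 ≤ (Kz : ℝ))
    (χ : ℕ → ℕ)
    (hχ : ∀ k : ℕ, χ k =
      max (max (σ₂ (6 * Kz * (k + 1) - 1)) (γ₁ (6 * Kz * (k + 1) - 1))) (θ₁ (6 * k + 5)))
    (Φ : ℕ → ℕ)
    (hΦ : ∀ k : ℕ, Φ k =
      σ₁ (⌈((χ (2 * k + 1) + 1 + ⌈Real.log ((4 * Kz * (k + 1) : ℕ) : ℝ)⌉₊ : ℕ) : ℝ) /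
        (1 - α)⌉₊ + 1)) :
    ∀ k : ℕ, ∀ n, Φ k ≤ n → ‖xs (n + 1) - xs n‖ ≤ 1 / (k + 1) := by
  classical
  have h1α : (0:ℝ) < 1 - α := by linarith
  -- J is nonexpansive
  have hJne : ∀ γ : ℝ, 0 < γ → ∀ u v : X, ‖Jr γ u - Jr γ v‖ ≤ ‖u - v‖ := by
    intro γ hγ u v
    have h := hA (Jr γ u) (Jr γ v) _ _ (hJ γ hγ u) (hJ γ hγ v) γ hγ
    have heq : Jr γ u - Jr γ v + γ • (γ⁻¹ • (u - Jr γ u) - γ⁻¹ • (v - Jr γ v)) = u - v := by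
      rw [smul_sub, smul_inv_smul₀ (ne_of_gt hγ), smul_inv_smul₀ (ne_of_gt hγ)]; abel
    rwa [heq] at h
  have hJz : ∀ γ : ℝ, 0 < γ → Jr γ z = z := by
    intro γ hγ
    have h := hA (Jr γ z) z _ _ (hJ γ hγ z) hz γ hγ
    have heq : Jr γ z - z + γ • (γ⁻¹ • (z - Jr γ z) - 0) = 0 := by
      rw [sub_zero, smul_inv_smul₀ (ne_of_gt hγ)]; abel
    rw [heq, norm_zero] at h
    have := le_antisymm h (norm_nonneg _)
    rw [norm_eq_zero, sub_eq_zero] at this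
    exact this.symm ▸ rfl
  have hJres : ∀ l m : ℝ, 0 < l → 0 < m → ∀ u : X,
      ‖Jr l u - Jr m u‖ ≤ |1 - m / l| * ‖u - Jr l u‖ := by
    intro l m hl hm u
    have h := hA (Jr l u) (Jr m u) _ _ (hJ l hl u) (hJ m hm u) m hm
    have heq : Jr l u - Jr m u + m • (l⁻¹ • (u - Jr l u) - m⁻¹ • (u - Jr m u))
        = (1 - m / l) • (Jr l u - u) := by
      match_scalars <;> field_simp <;> ring
    rw [heq] at h
    rw [norm_smul, Real.norm_eq_abs, norm_sub_rev (Jr l u) u] at h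
    exact h
  set M : ℝ := max ‖x - z‖ (‖f z - z‖ / (1 - α)) with hMdef
  have hM0 : 0 ≤ M := le_trans (norm_nonneg _) (le_max_left _ _)
  have hfz : ‖f z - z‖ ≤ (1 - α) * M := by
    have h : ‖f z - z‖ / (1 - α) ≤ M := le_max_right _ _
    rw [div_le_iff₀ h1α] at h
    linarith
  -- boundedness
  have hB : ∀ n, ‖xs n - z‖ ≤ M + ∑ i ∈ Finset.range n, ‖e i‖ := by
    intro n
    induction n with
    | zero =>
      simp only [hxs0, Finset.range_zero, Finset.sum_empty, add_zero]
      exact le_max_left _ _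
    | succ n ih =>
      have ha0 := (ha n).1
      have ha1 := (ha n).2
      have hdecomp : xs (n+1) - z
          = a n • (f (xs n) - z) + (1 - a n) • (Jr (lam n) (xs n) - z) + e n := by
        rw [hxs n]; module
      have h1 : ‖f (xs n) - z‖ ≤ α * ‖xs n - z‖ + ‖f z - z‖ := by
        calc ‖f (xs n) - z‖ ≤ ‖f (xs n) - f z‖ + ‖f z - z‖ := by
              have := norm_add_le (f (xs n) - f z) (f z - z)
              simpa [sub_add_sub_cancel] using this
          _ ≤ α * ‖xs n - z‖ + ‖f z - z‖ := by gcongr; exact hf _ _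
      have h2 : ‖Jr (lam n) (xs n) - z‖ ≤ ‖xs n - z‖ := by
        conv_lhs => rw [show z = Jr (lam n) z from (hJz (lam n) (hlam n)).symm]
        exact hJne _ (hlam n) _ _
      have hnorm : ‖xs (n+1) - z‖ ≤ a n * ‖f (xs n) - z‖
          + (1 - a n) * ‖Jr (lam n) (xs n) - z‖ + ‖e n‖ := by
        rw [hdecomp]
        refine (norm_add_le _ _).trans ?_
        gcongr
        refine (norm_add_le _ _).trans ?_
        rw [norm_smul, norm_smul, Real.norm_eq_abs, Real.norm_eq_abs,
          abs_of_nonneg ha0, abs_of_nonneg (by linarith : (0:ℝ) ≤ 1 - a n)]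
      rw [Finset.sum_range_succ]
      have hSnn : (0:ℝ) ≤ ∑ i ∈ Finset.range n, ‖e i‖ :=
        Finset.sum_nonneg fun i _ => norm_nonneg _
      have hc : 0 ≤ 1 - (1-α)*a n := by nlinarith
      have c1 : a n * ‖f (xs n) - z‖ ≤ a n * (α * ‖xs n - z‖ + ‖f z - z‖) :=
        mul_le_mul_of_nonneg_left h1 ha0
      have c3 : a n * ‖f z - z‖ ≤ a n * ((1-α) * M) := mul_le_mul_of_nonneg_left hfz ha0
      have c2 : (1 - a n) * ‖Jr (lam n) (xs n) - z‖ ≤ (1 - a n) * ‖xs n - z‖ :=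
        mul_le_mul_of_nonneg_left h2 (by linarith)
      have c5 : (1 - (1-α)*a n) * ‖xs n - z‖
          ≤ (1 - (1-α)*a n) * (M + ∑ i ∈ Finset.range n, ‖e i‖) :=
        mul_le_mul_of_nonneg_left ih hc
      have c6 : 0 ≤ a n * ((1-α) * ∑ i ∈ Finset.range n, ‖e i‖) := by positivity
      linarith [c1, c2, c3, c5, c6, hnorm]
  have hS1 : ∀ n, ∑ i ∈ Finset.range n, ‖e i‖ ≤ ∑ i ∈ Finset.range (θ₁ 0 + 1), ‖e i‖ + 1 := by
    intro n
    rcases le_or_gt n (θ₁ 0 + 1) with h | h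
    · have : ∑ i ∈ Finset.range n, ‖e i‖ ≤ ∑ i ∈ Finset.range (θ₁ 0 + 1), ‖e i‖ :=
        Finset.sum_le_sum_of_subset_of_nonneg (Finset.range_subset_range.mpr h)
          (fun i _ _ => norm_nonneg _)
      linarith
    · obtain ⟨p, hp⟩ : ∃ p, n = (θ₁ 0 + 1) + p := ⟨n - (θ₁ 0 + 1), by omega⟩
      subst hp
      rw [Finset.range_eq_Ico, ← Finset.sum_Ico_consecutive _ (Nat.zero_le (θ₁ 0 + 1)) (by omega : θ₁ 0 + 1 ≤ θ₁ 0 + 1 + p)]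
      rw [← Finset.range_eq_Ico]
      have he : Finset.Ico (θ₁ 0 + 1) (θ₁ 0 + 1 + p) = Finset.Icc (θ₁ 0 + 1) (θ₁ 0 + p) := by
        rw [← Finset.Ico_add_one_right_eq_Icc]
        congr 1
        omega
      rw [he]
      have := hθ₁ 0 (θ₁ 0) le_rfl p
      simp only [Nat.cast_zero, zero_add] at this
      linarith [this]
  have hMKz : M + 1 ≤ (Kz:ℝ) ∧ M + (∑ i ∈ Finset.range (θ₁ 0 + 1), ‖e i‖ + 1) ≤ (Kz:ℝ) := by
    have h1 := Nat.le_ceil (∑ i ∈ Finset.range (θ₁ 0 + 1), ‖e i‖)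
    have h2 : (0:ℝ) ≤ ∑ i ∈ Finset.range (θ₁ 0 + 1), ‖e i‖ :=
      Finset.sum_nonneg fun i _ => norm_nonneg _
    constructor <;> nlinarith [hKz]
  have hKzb : ∀ n, ‖xs n - z‖ ≤ (Kz:ℝ) := by
    intro n
    calc ‖xs n - z‖ ≤ M + ∑ i ∈ Finset.range n, ‖e i‖ := hB n
      _ ≤ M + (∑ i ∈ Finset.range (θ₁ 0 + 1), ‖e i‖ + 1) := by linarith [hS1 n]
      _ ≤ Kz := hMKz.2
  have hKz0 : (0:ℝ) < Kz := by exact_mod_cast Nat.lt_of_lt_of_le Nat.zero_lt_one hKz1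
  have hJb : ∀ n, ‖Jr (lam n) (xs n) - z‖ ≤ (Kz:ℝ) := by
    intro n
    calc ‖Jr (lam n) (xs n) - z‖ = ‖Jr (lam n) (xs n) - Jr (lam n) z‖ := by
          rw [hJz (lam n) (hlam n)]
      _ ≤ ‖xs n - z‖ := hJne _ (hlam n) _ _
      _ ≤ Kz := hKzb n
  have hfb : ∀ n, ‖f (xs n) - z‖ ≤ (Kz:ℝ) := by
    intro n
    have h1 : ‖f (xs n) - z‖ ≤ α * ‖xs n - z‖ + ‖f z - z‖ := by
      calc ‖f (xs n) - z‖ ≤ ‖f (xs n) - f z‖ + ‖f z - z‖ := by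
            have := norm_add_le (f (xs n) - f z) (f z - z)
            simpa [sub_add_sub_cancel] using this
        _ ≤ α * ‖xs n - z‖ + ‖f z - z‖ := by gcongr; exact hf _ _
    have h2 := hKzb n
    have h3 : M ≤ Kz := by linarith [hMKz.1]
    nlinarith
  have hdiff : ∀ (u v : X), ‖u - z‖ ≤ (Kz:ℝ) → ‖v - z‖ ≤ (Kz:ℝ) → ‖u - v‖ ≤ 2*(Kz:ℝ) := by
    intro u v hu hv
    have := norm_add_le (u - z) (z - v)
    rw [sub_add_sub_cancel] at this
    rw [norm_sub_rev z v] at this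
    linarith
  have hsb : ∀ n, ‖xs (n+1) - xs n‖ ≤ 2*(Kz:ℝ) := fun n => hdiff _ _ (hKzb (n+1)) (hKzb n)
  have hfJb : ∀ n, ‖f (xs n) - Jr (lam n) (xs n)‖ ≤ 2*(Kz:ℝ) :=
    fun n => hdiff _ _ (hfb n) (hJb n)
  have hxJb : ∀ n, ‖xs n - Jr (lam n) (xs n)‖ ≤ 2*(Kz:ℝ) :=
    fun n => hdiff _ _ (hKzb n) (hJb n)
  -- the error sequence
  set ε : ℕ → ℝ := fun m => 2*(Kz:ℝ)*(|a m - a (m+1)| + |1 - lam (m+1)/lam m|)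
      + (‖e m‖ + ‖e (m+1)‖) with hεdef
  have hεnn : ∀ m, 0 ≤ ε m := by
    intro m
    have : (0:ℝ) ≤ |a m - a (m+1)| + |1 - lam (m+1)/lam m| := by positivity
    have h2 : (0:ℝ) ≤ ‖e m‖ + ‖e (m+1)‖ := by positivity
    have : (0:ℝ) ≤ 2*(Kz:ℝ)*(|a m - a (m+1)| + |1 - lam (m+1)/lam m|) := by positivity
    simp only [hεdef]; linarith
  -- the key recursive inequality
  have hrec : ∀ m : ℕ, ‖xs (m+2) - xs (m+1)‖ ≤
      (1 - (1-α) * a (m+1)) * ‖xs (m+1) - xs m‖ + ε m := by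
    intro m
    have ha0 := (ha (m+1)).1
    have ha1 := (ha (m+1)).2
    have hd : xs (m+2) - xs (m+1) =
        a (m+1) • (f (xs (m+1)) - f (xs m))
      + (a (m+1) - a m) • (f (xs m) - Jr (lam m) (xs m))
      + (1 - a (m+1)) • (Jr (lam (m+1)) (xs (m+1)) - Jr (lam (m+1)) (xs m))
      + (1 - a (m+1)) • (Jr (lam (m+1)) (xs m) - Jr (lam m) (xs m))
      + (e (m+1) - e m) := by
      rw [show m+2 = (m+1)+1 from rfl, hxs (m+1), hxs m]; module
    have t1 : ‖a (m+1) • (f (xs (m+1)) - f (xs m))‖ ≤ a (m+1) * (α * ‖xs (m+1) - xs m‖) := by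
      rw [norm_smul, Real.norm_eq_abs, abs_of_nonneg ha0]
      exact mul_le_mul_of_nonneg_left (hf _ _) ha0
    have t2 : ‖(a (m+1) - a m) • (f (xs m) - Jr (lam m) (xs m))‖
        ≤ |a m - a (m+1)| * (2*(Kz:ℝ)) := by
      rw [norm_smul, Real.norm_eq_abs, abs_sub_comm]
      exact mul_le_mul_of_nonneg_left (hfJb m) (abs_nonneg _)
    have t3 : ‖(1 - a (m+1)) • (Jr (lam (m+1)) (xs (m+1)) - Jr (lam (m+1)) (xs m))‖
        ≤ (1 - a (m+1)) * ‖xs (m+1) - xs m‖ := by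
      rw [norm_smul, Real.norm_eq_abs, abs_of_nonneg (by linarith : (0:ℝ) ≤ 1 - a (m+1))]
      exact mul_le_mul_of_nonneg_left (hJne _ (hlam (m+1)) _ _) (by linarith)
    have t4 : ‖(1 - a (m+1)) • (Jr (lam (m+1)) (xs m) - Jr (lam m) (xs m))‖
        ≤ |1 - lam (m+1)/lam m| * (2*(Kz:ℝ)) := by
      rw [norm_smul, Real.norm_eq_abs, abs_of_nonneg (by linarith : (0:ℝ) ≤ 1 - a (m+1))]
      have h5 : ‖Jr (lam (m+1)) (xs m) - Jr (lam m) (xs m)‖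
          ≤ |1 - lam (m+1)/lam m| * (2*(Kz:ℝ)) := by
        rw [norm_sub_rev]
        exact (hJres (lam m) (lam (m+1)) (hlam m) (hlam (m+1)) (xs m)).trans
          (mul_le_mul_of_nonneg_left (hxJb m) (abs_nonneg _))
      calc (1 - a (m+1)) * ‖Jr (lam (m+1)) (xs m) - Jr (lam m) (xs m)‖
          ≤ 1 * ‖Jr (lam (m+1)) (xs m) - Jr (lam m) (xs m)‖ := by
            apply mul_le_mul_of_nonneg_right (by linarith) (norm_nonneg _)
        _ = ‖Jr (lam (m+1)) (xs m) - Jr (lam m) (xs m)‖ := one_mul _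
        _ ≤ _ := h5
    have t5 : ‖e (m+1) - e m‖ ≤ ‖e m‖ + ‖e (m+1)‖ := by
      rw [norm_sub_rev]; exact norm_sub_le _ _
    have htri : ‖xs (m+2) - xs (m+1)‖ ≤
        ‖a (m+1) • (f (xs (m+1)) - f (xs m))‖
      + ‖(a (m+1) - a m) • (f (xs m) - Jr (lam m) (xs m))‖
      + ‖(1 - a (m+1)) • (Jr (lam (m+1)) (xs (m+1)) - Jr (lam (m+1)) (xs m))‖
      + ‖(1 - a (m+1)) • (Jr (lam (m+1)) (xs m) - Jr (lam m) (xs m))‖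
      + ‖e (m+1) - e m‖ := by
      rw [hd]
      refine (norm_add_le _ _).trans (add_le_add_left ?_ _)
      refine (norm_add_le _ _).trans (add_le_add_left ?_ _)
      refine (norm_add_le _ _).trans (add_le_add_left ?_ _)
      exact norm_add_le _ _
    have hKznn : (0:ℝ) ≤ 2*(Kz:ℝ) := by positivity
    simp only [hεdef]
    linarith [t1, t2, t3, t4, t5, htri]
  have hKznn : (0:ℝ) ≤ 2*(Kz:ℝ) := by positivity
  have hc1 : ∀ j, (0:ℝ) ≤ 1 - (1-α) * a j := by
    intro j
    nlinarith [(ha j).1, (ha j).2]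
  intro k n hn
  rw [hΦ k] at hn
  set N := χ (2*k+1) with hNdef
  set L := ⌈Real.log ((4 * Kz * (k + 1) : ℕ) : ℝ)⌉₊ with hLdef
  set Q := ⌈((N + 1 + L : ℕ) : ℝ) / (1 - α)⌉₊ with hQdef
  -- hn : σ₁ (Q + 1) ≤ n
  have hQ1 : ((N:ℝ) + 1 + (L:ℝ)) / (1 - α) ≤ (Q:ℝ) := by
    have h := Nat.le_ceil (((N + 1 + L : ℕ) : ℝ) / (1 - α))
    rw [← hQdef] at h
    push_cast at h
    linarith
  have hcard : ∀ q : ℕ, ∑ i ∈ Finset.range q, a i ≤ (q:ℝ) := by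
    intro q
    calc ∑ i ∈ Finset.range q, a i ≤ ∑ i ∈ Finset.range q, 1 :=
          Finset.sum_le_sum (fun i _ => (ha i).2)
      _ = q := by simp
  have hrange : (Q:ℝ) + 1 ≤ ∑ i ∈ Finset.range (n+1), a i := by
    have h1 := hσ₁ (Q+1)
    have h2 : ∑ i ∈ Finset.range (σ₁ (Q+1) + 1), a i ≤ ∑ i ∈ Finset.range (n+1), a i :=
      Finset.sum_le_sum_of_subset_of_nonneg (Finset.range_subset_range.mpr (by omega))
        (fun i _ _ => (ha i).1)
    push_cast at h1
    linarith
  have hdivge : ((N:ℝ)+1) ≤ ((N:ℝ)+1)/(1-α) := by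
    rw [le_div_iff₀ h1α]
    nlinarith [Nat.cast_nonneg (α := ℝ) N]
  have hLnn : (0:ℝ) ≤ (L:ℝ) := Nat.cast_nonneg _
  have hQN : N + 1 ≤ Q := by
    have hdiv : ((N:ℝ)+1)/(1-α) + (L:ℝ)/(1-α) = ((N:ℝ)+1+(L:ℝ))/(1-α) := by ring
    have hLd : (0:ℝ) ≤ (L:ℝ)/(1-α) := by positivity
    have : ((N:ℝ)+1) ≤ (Q:ℝ) := by linarith
    exact_mod_cast this
  have hQn : Q ≤ n := by
    have h1 := (hrange.trans (hcard (n+1)))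
    have : (Q:ℝ) ≤ (n:ℝ) := by push_cast at h1 ⊢; linarith
    exact_mod_cast this
  have hNn : N + 1 ≤ n := le_trans hQN hQn
  obtain ⟨m, hm⟩ : ∃ m, n = N+1+m := ⟨n - (N+1), by omega⟩
  subst hm
  -- the chaining inequality
  have hchain : ∀ q : ℕ, ‖xs (N+1+q+1) - xs (N+1+q)‖ ≤
      2*(Kz:ℝ) * Real.exp (-(1-α) * ∑ j ∈ Finset.Icc (N+2) (N+1+q), a j)
      + ∑ i ∈ Finset.Icc (N+1) (N+q), ε i := by
    intro q
    induction q with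
    | zero =>
      rw [Finset.Icc_eq_empty (by omega), Finset.Icc_eq_empty (by omega)]
      simp only [Finset.sum_empty, mul_zero, neg_zero, Real.exp_zero, mul_one, add_zero]
      exact hsb (N+1)
    | succ q ih =>
      have hstep := hrec (N+1+q)
      have hE : ∑ j ∈ Finset.Icc (N+2) (N+1+(q+1)), a j
          = ∑ j ∈ Finset.Icc (N+2) (N+1+q), a j + a (N+1+q+1) := by
        rw [show N+1+(q+1) = (N+1+q)+1 from by omega]
        exact Finset.sum_Icc_succ_top (by omega) _
      have hT : ∑ i ∈ Finset.Icc (N+1) (N+(q+1)), ε i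
          = ∑ i ∈ Finset.Icc (N+1) (N+q), ε i + ε (N+q+1) := by
        rw [show N+(q+1) = (N+q)+1 from by omega]
        exact Finset.sum_Icc_succ_top (by omega) _
      have hTnn : (0:ℝ) ≤ ∑ i ∈ Finset.Icc (N+1) (N+q), ε i :=
        Finset.sum_nonneg fun i _ => hεnn i
      have hexp1 : 1 - (1-α) * a (N+1+q+1) ≤ Real.exp (-((1-α) * a (N+1+q+1))) := by
        have := Real.add_one_le_exp (-((1-α) * a (N+1+q+1)))
        linarith
      have hEnn : (0:ℝ) ≤ 2*(Kz:ℝ) * Real.exp (-(1-α) * ∑ j ∈ Finset.Icc (N+2) (N+1+q), a j) := by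
        positivity
      calc ‖xs (N+1+(q+1)+1) - xs (N+1+(q+1))‖
          ≤ (1 - (1-α) * a (N+1+q+1)) * ‖xs (N+1+q+1) - xs (N+1+q)‖ + ε (N+1+q) := by
            rw [show N+1+(q+1)+1 = N+1+q+2 from by omega,
              show N+1+(q+1) = N+1+q+1 from by omega]
            exact hstep
        _ ≤ (1 - (1-α) * a (N+1+q+1)) *
              (2*(Kz:ℝ) * Real.exp (-(1-α) * ∑ j ∈ Finset.Icc (N+2) (N+1+q), a j)
               + ∑ i ∈ Finset.Icc (N+1) (N+q), ε i) + ε (N+1+q) := by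
            have hcc := hc1 (N+1+q+1)
            have := mul_le_mul_of_nonneg_left ih hcc
            linarith
        _ ≤ Real.exp (-((1-α) * a (N+1+q+1))) *
              (2*(Kz:ℝ) * Real.exp (-(1-α) * ∑ j ∈ Finset.Icc (N+2) (N+1+q), a j))
            + (∑ i ∈ Finset.Icc (N+1) (N+q), ε i + ε (N+1+q)) := by
            have h1 := mul_le_mul_of_nonneg_right hexp1 hEnn
            have h2 : (1 - (1-α) * a (N+1+q+1)) * ∑ i ∈ Finset.Icc (N+1) (N+q), ε i
                ≤ ∑ i ∈ Finset.Icc (N+1) (N+q), ε i := by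
              nlinarith [mul_nonneg (mul_nonneg (le_of_lt h1α) (ha (N+1+q+1)).1) hTnn]
            linarith [h1, h2, mul_le_mul_of_nonneg_left (le_refl (0:ℝ)) (le_refl (0:ℝ))]
        _ = 2*(Kz:ℝ) * Real.exp (-(1-α) * ∑ j ∈ Finset.Icc (N+2) (N+1+(q+1)), a j)
            + ∑ i ∈ Finset.Icc (N+1) (N+(q+1)), ε i := by
            rw [hE, hT, mul_add, Real.exp_add,
              show ε (N+q+1) = ε (N+1+q) from by rw [show N+q+1 = N+1+q from by omega]]
            ring
  -- moduli from χ
  have hσ₂N : σ₂ (6*Kz*(2*k+1+1) - 1) ≤ N := by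
    rw [hNdef, hχ]
    exact (le_max_left _ _).trans (le_max_left _ _)
  have hγ₁N : γ₁ (6*Kz*(2*k+1+1) - 1) ≤ N := by
    rw [hNdef, hχ]
    exact (le_max_right _ _).trans (le_max_left _ _)
  have hθ₁N : θ₁ (6*(2*k+1) + 5) ≤ N := by
    rw [hNdef, hχ]
    exact le_max_right _ _
  have h6pos : (1:ℕ) ≤ 6*Kz*(2*k+1+1) := by nlinarith
  have hcastden : ((6*Kz*(2*k+1+1) - 1 : ℕ):ℝ) + 1 = 12*(Kz:ℝ)*((k:ℝ)+1) := by
    rw [Nat.cast_sub h6pos]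
    push_cast
    ring
  have hA1 : ∑ i ∈ Finset.Icc (N+1) (N+m), |a i - a (i+1)| ≤ 1/(12*(Kz:ℝ)*((k:ℝ)+1)) := by
    have h := hσ₂ (6*Kz*(2*k+1+1) - 1) N hσ₂N m
    rwa [hcastden] at h
  have hB1 : ∑ i ∈ Finset.Icc (N+1) (N+m), |1 - lam (i+1)/lam i| ≤ 1/(12*(Kz:ℝ)*((k:ℝ)+1)) := by
    have h := hγ₁ (6*Kz*(2*k+1+1) - 1) N hγ₁N m
    rwa [hcastden] at h
  have hcastden2 : ((6*(2*k+1) + 5 : ℕ):ℝ) + 1 = 12*((k:ℝ)+1) := by push_cast; ring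
  have hC1 : ∑ i ∈ Finset.Icc (N+1) (N+m), ‖e i‖ ≤ 1/(12*((k:ℝ)+1)) := by
    have h := hθ₁ (6*(2*k+1) + 5) N hθ₁N m
    rwa [hcastden2] at h
  have hD1 : ∑ i ∈ Finset.Icc (N+1) (N+m), ‖e (i+1)‖ ≤ 1/(12*((k:ℝ)+1)) := by
    have h := hθ₁ (6*(2*k+1) + 5) (N+1) (hθ₁N.trans (Nat.le_succ N)) m
    have hre : ∑ i ∈ Finset.Icc (N+1) (N+m), ‖e (i+1)‖
        = ∑ i ∈ Finset.Icc (N+1+1) (N+m+1), ‖e i‖ := by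
      rw [← Finset.map_add_right_Icc _ _ 1, Finset.sum_map]
      rfl
    rw [hre, show N+m+1 = N+1+m from by omega]
    rwa [hcastden2] at h
  -- total tail bound
  have hTail : ∑ i ∈ Finset.Icc (N+1) (N+m), ε i ≤ 1/(2*((k:ℝ)+1)) := by
    have hsplit : ∑ i ∈ Finset.Icc (N+1) (N+m), ε i
        = 2*(Kz:ℝ) * (∑ i ∈ Finset.Icc (N+1) (N+m), |a i - a (i+1)|)
        + 2*(Kz:ℝ) * (∑ i ∈ Finset.Icc (N+1) (N+m), |1 - lam (i+1)/lam i|)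
        + ((∑ i ∈ Finset.Icc (N+1) (N+m), ‖e i‖)
           + ∑ i ∈ Finset.Icc (N+1) (N+m), ‖e (i+1)‖) := by
      rw [Finset.mul_sum, Finset.mul_sum, ← Finset.sum_add_distrib, ← Finset.sum_add_distrib,
        ← Finset.sum_add_distrib]
      apply Finset.sum_congr rfl
      intro i _
      simp only [hεdef]
      ring
    have e1 : 2*(Kz:ℝ) * (1/(12*(Kz:ℝ)*((k:ℝ)+1))) = 1/(6*((k:ℝ)+1)) := by
      field_simp
      ring
    have m1 := mul_le_mul_of_nonneg_left hA1 hKznn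
    have m2 := mul_le_mul_of_nonneg_left hB1 hKznn
    have e2 : 1/(6*((k:ℝ)+1)) + 1/(6*((k:ℝ)+1)) + (1/(12*((k:ℝ)+1)) + 1/(12*((k:ℝ)+1)))
        = 1/(2*((k:ℝ)+1)) := by
      field_simp
      ring
    rw [hsplit]
    linarith [m1, m2, hC1, hD1]
  -- lower bound for the exponential sum
  have hSsum : (L:ℝ)/(1-α) ≤ ∑ j ∈ Finset.Icc (N+2) (N+1+m), a j := by
    have hsplit : ∑ j ∈ Finset.Icc (N+2) (N+1+m), a j
        = ∑ j ∈ Finset.range (N+1+m+1), a j - ∑ j ∈ Finset.range (N+2), a j := by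
      rw [← Finset.Ico_add_one_right_eq_Icc, Finset.sum_Ico_eq_sub a (by omega)]
    have h2 := hcard (N+2)
    have hdiv : ((N:ℝ)+1)/(1-α) + (L:ℝ)/(1-α) = ((N:ℝ)+1+(L:ℝ))/(1-α) := by ring
    push_cast at h2
    rw [hsplit]
    linarith [hQ1, hdivge, hdiv, hrange]
  have htnat : (1:ℕ) ≤ 4*Kz*(k+1) := by nlinarith
  have ht0 : (0:ℝ) < ((4*Kz*(k+1) : ℕ):ℝ) := by
    have : (0:ℕ) < 4*Kz*(k+1) := htnat
    exact_mod_cast this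
  have hlog : Real.log ((4*Kz*(k+1) : ℕ):ℝ) ≤ (L:ℝ) := by
    rw [hLdef]
    exact Nat.le_ceil _
  have hexp2 : Real.exp (-(1-α) * ∑ j ∈ Finset.Icc (N+2) (N+1+m), a j)
      ≤ 1/((4*Kz*(k+1) : ℕ):ℝ) := by
    have hmul := mul_le_mul_of_nonneg_left hSsum (le_of_lt h1α)
    have hq : (1-α) * ((L:ℝ)/(1-α)) = (L:ℝ) := by field_simp
    have h1 : -(1-α) * ∑ j ∈ Finset.Icc (N+2) (N+1+m), a j ≤ -(L:ℝ) := by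
      rw [hq] at hmul
      linarith
    have h3 : -(L:ℝ) ≤ - Real.log (((4*Kz*(k+1):ℕ)):ℝ) := by linarith
    calc Real.exp (-(1-α) * ∑ j ∈ Finset.Icc (N+2) (N+1+m), a j)
        ≤ Real.exp (- Real.log (((4*Kz*(k+1):ℕ)):ℝ)) := Real.exp_le_exp.mpr (h1.trans h3)
      _ = 1/((4*Kz*(k+1) : ℕ):ℝ) := by rw [Real.exp_neg, Real.exp_log ht0, one_div]
  have hfinal1 : 2*(Kz:ℝ) * Real.exp (-(1-α) * ∑ j ∈ Finset.Icc (N+2) (N+1+m), a j)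
      ≤ 1/(2*((k:ℝ)+1)) := by
    have hh := mul_le_mul_of_nonneg_left hexp2 hKznn
    have heq : 2*(Kz:ℝ) * (1/((4*Kz*(k+1):ℕ):ℝ)) = 1/(2*((k:ℝ)+1)) := by
      have hKzne : (Kz:ℝ) ≠ 0 := Nat.cast_ne_zero.mpr (by omega)
      have hcne : ((k:ℝ)+1) ≠ 0 := by positivity
      push_cast
      field_simp
      ring
    linarith
  have hgoal : 1/(2*((k:ℝ)+1)) + 1/(2*((k:ℝ)+1)) = 1/((k:ℝ)+1) := by
    rw [← add_div, show (1:ℝ)+1 = 2 by norm_num, mul_comm, ← div_div, div_right_comm]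
    norm_num
  calc ‖xs (N+1+m+1) - xs (N+1+m)‖
      ≤ 2*(Kz:ℝ) * Real.exp (-(1-α) * ∑ j ∈ Finset.Icc (N+2) (N+1+m), a j)
        + ∑ i ∈ Finset.Icc (N+1) (N+m), ε i := hchain m
    _ ≤ 1/((k:ℝ)+1) := by linarith
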